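/- Let Γ be a finitely generated free abelian group and R = ⊕_{λ∈Γ} R_λ a Γ-graded k-algebra over a field k which is an integral domain, is integrally closed, has field of fractions finitely generated over k, and satisfies dim_k R_λ ≤ 1 for all λ. Then the following are equivalent: (i) R is a finitely generated k-algebra; (ii) the support Eff(R) = {λ ∈ Γ : R_λ ≠ 0} is a finitely generated monoid; (iii) the cone Eff(R)_{Q≥0} ⊂ Γ⊗Q of nonnegative rational combinations of elements of Eff(R) is a finitely generated Q≥0-monoid. -/

import Mathlib

open scoped TensorProduct

/-- The cone of nonnegative rational combinations of elements of a set `S ⊆ Γ`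
inside `ℚ ⊗[ℤ] Γ`. -/
def ratCone {Γ : Type*} [AddCommGroup Γ] (S : Set Γ) : Set (ℚ ⊗[ℤ] Γ) :=
  {y | ∃ (M : ℕ) (c : Fin M → ℚ) (v : Fin M → Γ),
    (∀ j, 0 ≤ c j) ∧ (∀ j, v j ∈ S) ∧ y = ∑ j, c j • ((1 : ℚ) ⊗ₜ[ℤ] v j)}

set_option linter.unusedSectionVars false
set_option maxHeartbeats 1600000

section auxinj
variable {Γ : Type*} [AddCommGroup Γ]

lemma aux_repr_one_tmul {ι : Type*} (b : Module.Basis ι ℤ Γ) (v : Γ) (j : ι) :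
    (Algebra.TensorProduct.basis ℚ b).repr ((1:ℚ) ⊗ₜ[ℤ] v) j = ((b.repr v j : ℤ) : ℚ) := by
  simp [Algebra.TensorProduct.basis_repr_tmul, Finsupp.mapRange_apply]

lemma aux_tmul_inj [Module.Free ℤ Γ] : Function.Injective (fun γ : Γ => (1:ℚ) ⊗ₜ[ℤ] γ) := by
  intro γ γ' h
  classical
  let b := Module.Free.chooseBasis ℤ Γ
  apply b.repr.injective
  ext j
  have := congrArg (fun y => (Algebra.TensorProduct.basis ℚ b).repr y j) h
  simp only [aux_repr_one_tmul] at this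
  exact_mod_cast this

lemma aux_coords {ι : Type*} [Fintype ι] (b : Module.Basis ι ℤ Γ) {N : ℕ} (t : Fin N → ℚ)
    (w : Fin N → Γ) (δ : Γ)
    (h : (1:ℚ) ⊗ₜ[ℤ] δ = ∑ i, t i • ((1:ℚ) ⊗ₜ[ℤ] w i)) (j : ι) :
    ((b.repr δ j : ℤ) : ℚ) = ∑ i, t i * ((b.repr (w i) j : ℤ) : ℚ) := by
  have h2 := congrArg (fun y => ((Algebra.TensorProduct.basis ℚ b).repr y) j) h
  simpa only [map_sum, map_smul, Finsupp.coe_finset_sum, Finset.sum_apply,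
    Finsupp.smul_apply, smul_eq_mul, aux_repr_one_tmul] using h2

lemma aux_finite_bounded {ι : Type*} [Fintype ι] (b : Module.Basis ι ℤ Γ) (B : ι → ℤ) :
    {γ : Γ | ∀ j, |b.repr γ j| ≤ B j}.Finite := by
  classical
  have hinj : Function.Injective (fun γ : Γ => (fun j => b.repr γ j : ι → ℤ)) := by
    intro x y h
    apply b.repr.injective
    ext j
    exact congrFun h j
  have hfin : (Set.pi Set.univ (fun j : ι => Set.Icc (-B j) (B j))).Finite :=
    Set.Finite.pi (fun j => Set.finite_Icc _ _)
  have hsub : {γ : Γ | ∀ j, |b.repr γ j| ≤ B j} ⊆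
      (fun γ : Γ => (fun j => b.repr γ j : ι → ℤ)) ⁻¹'
        (Set.pi Set.univ (fun j => Set.Icc (-B j) (B j))) := by
    intro γ hγ j _
    exact abs_le.mp (hγ j)
  exact Set.Finite.subset (Set.Finite.preimage hinj.injOn hfin) hsub

lemma aux_tmul_nsmul (n : ℕ) (v : Γ) :
    (1 : ℚ) ⊗ₜ[ℤ] (n • v) = (n : ℚ) • ((1 : ℚ) ⊗ₜ[ℤ] v) := by
  rw [Nat.cast_smul_eq_nsmul, ← TensorProduct.tmul_smul]
end auxinj

lemma aux_denom {M : ℕ} (c : Fin M → ℚ) (hc : ∀ j, 0 ≤ c j) :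
    ∃ m : ℕ, 0 < m ∧ ∀ j, ∃ n : ℕ, (n : ℚ) = m * c j := by
  refine ⟨∏ j, (c j).den, Finset.prod_pos (fun j _ => (c j).pos), fun j => ?_⟩
  obtain ⟨t, ht⟩ := Finset.dvd_prod_of_mem (fun i => (c i).den) (Finset.mem_univ j)
  refine ⟨(c j).num.toNat * t, ?_⟩
  have hnum : (((c j).num.toNat : ℕ) : ℚ) = ((c j).num : ℚ) := by
    exact_mod_cast Int.toNat_of_nonneg (Rat.num_nonneg.mpr (hc j))
  have key : ((c j).den : ℚ) * c j = ((c j).num : ℚ) := by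
    rw [mul_comm]
    exact_mod_cast Rat.mul_den_eq_num (c j)
  rw [ht]
  push_cast
  rw [hnum, mul_comm ((c j).den : ℚ) (t : ℚ), mul_assoc, key, mul_comm]

section main
variable {k R Γ : Type*} [Field k] [CommRing R] [Algebra k R]
  [AddCommGroup Γ] [DecidableEq Γ] (𝒜 : Γ → Submodule k R) [GradedAlgebra 𝒜] [IsDomain R]

lemma aux_rank_le_one {p : Submodule k R} (hp : Module.rank k p ≤ 1)
    {x y : R} (hx : x ∈ p) (hx0 : x ≠ 0) (hy : y ∈ p) : ∃ c : k, y = c • x := by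
  obtain ⟨v₀, hv₀⟩ := rank_le_one_iff.mp hp
  obtain ⟨a, ha⟩ := hv₀ ⟨x, hx⟩
  obtain ⟨bb, hb⟩ := hv₀ ⟨y, hy⟩
  have ha0 : a ≠ 0 := by
    rintro rfl
    apply hx0
    simpa using congrArg Subtype.val ha.symm
  refine ⟨bb * a⁻¹, ?_⟩
  have hx' : (a⁻¹ • x : R) = (v₀ : R) := by
    have := congrArg Subtype.val ha
    simp only [Submodule.coe_smul] at this
    rw [← this, smul_smul, inv_mul_cancel₀ ha0, one_smul]
  have := congrArg Subtype.val hb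
  simp only [Submodule.coe_smul] at this
  rw [← this, ← hx', smul_smul]

/-- The support of the grading, as an additive submonoid. -/
def effMonoid : AddSubmonoid Γ where
  carrier := {γ : Γ | 𝒜 γ ≠ ⊥}
  zero_mem' := by
    intro h
    have h1 : (1 : R) ∈ 𝒜 0 := SetLike.one_mem_graded 𝒜
    rw [h] at h1
    simp only [Submodule.mem_bot] at h1
    exact one_ne_zero h1
  add_mem' := by
    intro γ δ hγ hδ
    simp only [Set.mem_setOf_eq, Submodule.ne_bot_iff] at hγ hδ ⊢
    obtain ⟨a, ha, ha0⟩ := hγ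
    obtain ⟨b, hb, hb0⟩ := hδ
    exact ⟨a * b, SetLike.mul_mem_graded ha hb, mul_ne_zero ha0 hb0⟩

/-- Saturation: if `γ + β = α` with `α, β` effective and `n • γ` effective for some `n > 0`,
then `γ` is effective. Uses integral closedness. -/
lemma aux_sat [IsIntegrallyClosed R] (hdim : ∀ γ : Γ, Module.rank k (𝒜 γ) ≤ 1)
    {γ α β : Γ} {n : ℕ} (hn : 0 < n) (hα : 𝒜 α ≠ ⊥) (hβ : 𝒜 β ≠ ⊥)
    (hγβ : γ + β = α) (hnγ : 𝒜 (n • γ) ≠ ⊥) : 𝒜 γ ≠ ⊥ := by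
  obtain ⟨a, ha, ha0⟩ := Submodule.ne_bot_iff _ |>.mp hα
  obtain ⟨b, hb, hb0⟩ := Submodule.ne_bot_iff _ |>.mp hβ
  obtain ⟨z, hz, hz0⟩ := Submodule.ne_bot_iff _ |>.mp hnγ
  have han : a ^ n ∈ 𝒜 (n • α) := SetLike.pow_mem_graded n ha
  have hzbn : z * b ^ n ∈ 𝒜 (n • α) := by
    have : z * b ^ n ∈ 𝒜 (n • γ + n • β) := SetLike.mul_mem_graded hz (SetLike.pow_mem_graded n hb)
    rwa [← smul_add, hγβ] at this
  obtain ⟨c, hc⟩ := aux_rank_le_one (hdim (n • α)) hzbn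
    (mul_ne_zero hz0 (pow_ne_zero n hb0)) han
  set K := FractionRing R
  set f := algebraMap R (FractionRing R)
  have hfinj : Function.Injective f := IsFractionRing.injective R K
  have hfb0 : f b ≠ 0 := fun h => hb0 (hfinj (by simpa using h))
  set y : K := f a / f b
  have hyn : y ^ n = f (c • z) := by
    have h1 : (c • z) * b ^ n = a ^ n := by rw [smul_mul_assoc, ← hc]
    have h2 : f (c • z) * (f b) ^ n = (f a) ^ n := by
      rw [← map_pow, ← map_mul, h1, map_pow]
    have hbn : (f b) ^ n ≠ 0 := pow_ne_zero _ hfb0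
    show (f a / f b) ^ n = f (c • z)
    rw [div_pow, ← h2, mul_div_cancel_right₀ _ hbn]
  have hyint : IsIntegral R y := by
    refine IsIntegral.of_pow hn ?_
    rw [hyn]; exact isIntegral_algebraMap
  obtain ⟨r, hr⟩ := IsIntegrallyClosed.isIntegral_iff.mp hyint
  have hrb : r * b = a := by
    apply hfinj
    rw [map_mul, hr]
    exact div_mul_cancel₀ _ hfb0
  have hcomp : (DirectSum.decompose 𝒜 r γ : R) * b = a := by
    have h1 : (DirectSum.decompose 𝒜 (r * b) (γ + β) : R) = (DirectSum.decompose 𝒜 r γ : R) * b :=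
      DirectSum.coe_decompose_mul_add_of_right_mem 𝒜 hb
    rw [hrb, hγβ] at h1
    rw [← h1, DirectSum.decompose_of_mem_same 𝒜 ha]
  refine Submodule.ne_bot_iff _ |>.mpr ⟨_, SetLike.coe_mem (DirectSum.decompose 𝒜 r γ), ?_⟩
  intro h0
  rw [h0, zero_mul] at hcomp
  exact ha0 hcomp.symm

lemma aux_one_to_two (h : Algebra.FiniteType k R) :
    ∃ s : Finset Γ, {γ : Γ | 𝒜 γ ≠ ⊥} = ↑(AddSubmonoid.closure (↑s : Set Γ)) := by
  classical
  obtain ⟨s, hs⟩ := h.out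
  set D : Finset Γ := s.sup (fun r => DFinsupp.support (DirectSum.decompose 𝒜 r)) with hD
  refine ⟨D, ?_⟩
  set G : Set R := {x | ∃ r ∈ s, ∃ γ ∈ DFinsupp.support (DirectSum.decompose 𝒜 r),
    x = (DirectSum.decompose 𝒜 r γ : R)} with hG
  have hGdeg : ∀ x ∈ Submonoid.closure G, ∃ δ ∈ AddSubmonoid.closure (↑D : Set Γ), x ∈ 𝒜 δ := by
    intro x hx
    induction hx using Submonoid.closure_induction with
    | mem x hxG =>
      obtain ⟨r, hr, γ, hγ, rfl⟩ := hxG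
      refine ⟨γ, AddSubmonoid.subset_closure ?_, SetLike.coe_mem _⟩
      exact Finset.mem_coe.mpr (Finset.mem_sup.mpr ⟨r, hr, hγ⟩)
    | one => exact ⟨0, zero_mem _, SetLike.one_mem_graded 𝒜⟩
    | mul x y _ _ ihx ihy =>
      obtain ⟨δ₁, hδ₁, hx1⟩ := ihx
      obtain ⟨δ₂, hδ₂, hy1⟩ := ihy
      exact ⟨δ₁ + δ₂, add_mem hδ₁ hδ₂, SetLike.mul_mem_graded hx1 hy1⟩
  have hGgen : Algebra.adjoin k G = ⊤ := by
    rw [eq_top_iff, ← hs]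
    apply Algebra.adjoin_le
    intro r hr
    rw [← DirectSum.sum_support_decompose 𝒜 r]
    exact Subalgebra.sum_mem _ (fun γ hγ => Algebra.subset_adjoin ⟨r, hr, γ, hγ, rfl⟩)
  ext γ
  simp only [Set.mem_setOf_eq, SetLike.mem_coe]
  constructor
  · intro hγ
    by_contra hγD
    obtain ⟨r₀, hr₀, hr₀0⟩ := Submodule.ne_bot_iff _ |>.mp hγ
    have hzero : ∀ x ∈ Submodule.span k (↑(Submonoid.closure G) : Set R),
        (DirectSum.decompose 𝒜 x γ : R) = 0 := by
      intro x hx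
      induction hx using Submodule.span_induction with
      | mem x hxm =>
        obtain ⟨δ, hδ, hxδ⟩ := hGdeg x hxm
        exact DirectSum.decompose_of_mem_ne 𝒜 hxδ (fun h => hγD (h ▸ hδ))
      | zero => simp
      | add x y _ _ ihx ihy =>
        rw [DirectSum.decompose_add, DirectSum.add_apply]
        push_cast
        rw [ihx, ihy, add_zero]
      | smul c x _ ih =>
        rw [DirectSum.decompose_smul, DirectSum.smul_apply, SetLike.val_smul, ih, smul_zero]
    have hr₀mem : r₀ ∈ Submodule.span k (↑(Submonoid.closure G) : Set R) := by
      rw [← Algebra.adjoin_eq_span, hGgen]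
      trivial
    have := hzero r₀ hr₀mem
    rw [DirectSum.decompose_of_mem_same 𝒜 hr₀] at this
    exact hr₀0 this
  · intro hγ
    induction hγ using AddSubmonoid.closure_induction with
    | mem δ hδ =>
      obtain ⟨r, hr, hδr⟩ := Finset.mem_sup.mp (Finset.mem_coe.mp hδ)
      intro hbot
      apply DFinsupp.mem_support_iff.mp hδr
      have hmem : ((DirectSum.decompose 𝒜 r δ : 𝒜 δ) : R) ∈ 𝒜 δ := SetLike.coe_mem _
      exact ZeroMemClass.coe_eq_zero.mp ((Submodule.eq_bot_iff _).mp hbot _ hmem)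
    | zero =>
      intro hbot
      have h1 : (1 : R) ∈ 𝒜 0 := SetLike.one_mem_graded 𝒜
      rw [hbot] at h1
      simp only [Submodule.mem_bot] at h1
      exact one_ne_zero h1
    | add x y _ _ ihx ihy =>
      simp only [Submodule.ne_bot_iff] at ihx ihy ⊢
      obtain ⟨a, ha, ha0⟩ := ihx
      obtain ⟨b, hb, hb0⟩ := ihy
      exact ⟨a * b, SetLike.mul_mem_graded ha hb, mul_ne_zero ha0 hb0⟩

lemma aux_two_to_one (hdim : ∀ γ : Γ, Module.rank k (𝒜 γ) ≤ 1)
    (h : ∃ s : Finset Γ, {γ : Γ | 𝒜 γ ≠ ⊥} = ↑(AddSubmonoid.closure (↑s : Set Γ))) :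
    Algebra.FiniteType k R := by
  classical
  obtain ⟨s, hs⟩ := h
  have hchoice : ∀ γ : Γ, ∃ x : R, x ∈ 𝒜 γ ∧ (𝒜 γ ≠ ⊥ → x ≠ 0) := by
    intro γ
    by_cases hγ : 𝒜 γ ≠ ⊥
    · obtain ⟨x, hx, hx0⟩ := Submodule.ne_bot_iff _ |>.mp hγ
      exact ⟨x, hx, fun _ => hx0⟩
    · push_neg at hγ
      exact ⟨0, zero_mem _, fun h' => absurd hγ h'⟩
  choose g hg1 hg2 using hchoice
  refine ⟨⟨s.image g, ?_⟩⟩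
  rw [eq_top_iff]
  intro r _
  rw [← DirectSum.sum_support_decompose 𝒜 r]
  apply Subalgebra.sum_mem
  intro γ hγsup
  suffices hsuff : ∀ γ : Γ, 𝒜 γ ≤ (Algebra.adjoin k (↑(s.image g) : Set R)).toSubmodule by
    exact hsuff γ (SetLike.coe_mem _)
  intro γ
  by_cases hγ : 𝒜 γ ≠ ⊥
  swap
  · push_neg at hγ
    rw [hγ]
    exact bot_le
  have hγcl : γ ∈ AddSubmonoid.closure (↑s : Set Γ) := by
    have h1 : γ ∈ {γ : Γ | 𝒜 γ ≠ ⊥} := hγ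
    rw [hs] at h1
    exact h1
  clear hγ
  induction hγcl using AddSubmonoid.closure_induction with
  | mem σ hσ =>
    intro y hy
    have hσeff : 𝒜 σ ≠ ⊥ := by
      have : σ ∈ {γ : Γ | 𝒜 γ ≠ ⊥} := by rw [hs]; exact AddSubmonoid.subset_closure hσ
      exact this
    obtain ⟨c, hc⟩ := aux_rank_le_one (hdim σ) (hg1 σ) (hg2 σ hσeff) hy
    rw [hc]
    exact Subalgebra.smul_mem _ (Algebra.subset_adjoin (Finset.mem_coe.mpr
      (Finset.mem_image_of_mem g hσ))) c
  | zero =>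
    intro y hy
    obtain ⟨c, hc⟩ := aux_rank_le_one (hdim 0) (SetLike.one_mem_graded 𝒜) one_ne_zero hy
    rw [hc]
    exact Subalgebra.smul_mem _ (Subalgebra.one_mem _) c
  | add x y hx hy ihx ihy =>
    intro z hz
    have hxeff : 𝒜 x ≠ ⊥ := by
      have : x ∈ {γ : Γ | 𝒜 γ ≠ ⊥} := by rw [hs]; exact hx
      exact this
    have hyeff : 𝒜 y ≠ ⊥ := by
      have : y ∈ {γ : Γ | 𝒜 γ ≠ ⊥} := by rw [hs]; exact hy
      exact this
    have hab : g x * g y ∈ 𝒜 (x + y) := SetLike.mul_mem_graded (hg1 x) (hg1 y)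
    have hab0 : g x * g y ≠ 0 := mul_ne_zero (hg2 x hxeff) (hg2 y hyeff)
    obtain ⟨c, hc⟩ := aux_rank_le_one (hdim (x + y)) hab hab0 hz
    rw [hc]
    exact Subalgebra.smul_mem _ (Subalgebra.mul_mem _ (ihx (hg1 x)) (ihy (hg1 y))) c

lemma aux_two_to_three
    (h : ∃ s : Finset Γ, {γ : Γ | 𝒜 γ ≠ ⊥} = ↑(AddSubmonoid.closure (↑s : Set Γ))) :
    ∃ (N : ℕ) (x : Fin N → ℚ ⊗[ℤ] Γ),
      (∀ i, x i ∈ ratCone {γ : Γ | 𝒜 γ ≠ ⊥}) ∧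
      ratCone {γ : Γ | 𝒜 γ ≠ ⊥} =
        {y | ∃ c : Fin N → ℚ, (∀ i, 0 ≤ c i) ∧ y = ∑ i, c i • x i} := by
  classical
  obtain ⟨s, hs⟩ := h
  have hsub : (↑s : Set Γ) ⊆ {γ : Γ | 𝒜 γ ≠ ⊥} := by
    rw [hs]; exact AddSubmonoid.subset_closure
  set N := s.card
  set e := s.equivFin
  set w : Fin N → Γ := fun i => (e.symm i : Γ)
  have hw : ∀ i, w i ∈ {γ : Γ | 𝒜 γ ≠ ⊥} := fun i => hsub (e.symm i).2
  refine ⟨N, fun i => (1 : ℚ) ⊗ₜ[ℤ] w i, ?_, ?_⟩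
  · intro i
    exact ⟨1, fun _ => 1, fun _ => w i, fun _ => zero_le_one, fun _ => hw i, by simp⟩
  · ext y
    constructor
    · rintro ⟨M, c, v, hc, hv, rfl⟩
      have hrep : ∀ j, ∃ f : Γ → ℕ, ∑ σ ∈ s, f σ • σ = v j := by
        intro j
        have hvj : v j ∈ AddSubmonoid.closure (↑s : Set Γ) := by
          have := hv j; rwa [hs] at this
        rw [← Submodule.span_nat_eq_addSubmonoidClosure, Submodule.mem_toAddSubmonoid] at hvj
        obtain ⟨g, -, hg⟩ := Submodule.mem_span_finset.mp hvj
        exact ⟨g, hg⟩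
      choose f hf using hrep
      refine ⟨fun i => ∑ j, c j * (f j (w i) : ℚ), fun i => Finset.sum_nonneg
        (fun j _ => mul_nonneg (hc j) (by positivity)), ?_⟩
      have hexp : ∀ j, (1 : ℚ) ⊗ₜ[ℤ] v j = ∑ i, (f j (w i) : ℚ) • ((1:ℚ) ⊗ₜ[ℤ] w i) := by
        intro j
        have h1 : (1:ℚ) ⊗ₜ[ℤ] v j = ∑ σ ∈ s, (f j σ : ℚ) • ((1:ℚ) ⊗ₜ[ℤ] σ) := by
          rw [← hf j, TensorProduct.tmul_sum]
          exact Finset.sum_congr rfl fun σ _ => aux_tmul_nsmul _ _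
        rw [h1, ← Finset.sum_coe_sort s (fun σ => (f j σ : ℚ) • ((1:ℚ) ⊗ₜ[ℤ] (σ:Γ)))]
        exact (Equiv.sum_comp e.symm
          (fun a : {x // x ∈ s} => (f j (a:Γ) : ℚ) • ((1:ℚ) ⊗ₜ[ℤ] (a:Γ)))).symm
      calc ∑ j : Fin M, c j • ((1:ℚ) ⊗ₜ[ℤ] v j)
          = ∑ j : Fin M, ∑ i : Fin N, (c j * (f j (w i) : ℚ)) • ((1:ℚ) ⊗ₜ[ℤ] w i) := by
            refine Finset.sum_congr rfl fun j _ => ?_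
            rw [hexp j, Finset.smul_sum]
            exact Finset.sum_congr rfl fun i _ => smul_smul _ _ _
        _ = ∑ i : Fin N, ∑ j : Fin M, (c j * (f j (w i) : ℚ)) • ((1:ℚ) ⊗ₜ[ℤ] w i) :=
            Finset.sum_comm
        _ = ∑ i : Fin N, (∑ j : Fin M, c j * (f j (w i) : ℚ)) • ((1:ℚ) ⊗ₜ[ℤ] w i) :=
            Finset.sum_congr rfl fun i _ => (Finset.sum_smul).symm
    · rintro ⟨c, hc, rfl⟩
      exact ⟨N, c, w, hc, hw, rfl⟩

lemma aux_three_to_two [Module.Free ℤ Γ] [Module.Finite ℤ Γ] [IsIntegrallyClosed R]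
    (hdim : ∀ γ : Γ, Module.rank k (𝒜 γ) ≤ 1)
    (h : ∃ (N : ℕ) (x : Fin N → ℚ ⊗[ℤ] Γ),
      (∀ i, x i ∈ ratCone {γ : Γ | 𝒜 γ ≠ ⊥}) ∧
      ratCone {γ : Γ | 𝒜 γ ≠ ⊥} =
        {y | ∃ c : Fin N → ℚ, (∀ i, 0 ≤ c i) ∧ y = ∑ i, c i • x i}) :
    ∃ s : Finset Γ, {γ : Γ | 𝒜 γ ≠ ⊥} = ↑(AddSubmonoid.closure (↑s : Set Γ)) := by
  classical
  obtain ⟨N, x, hx, hcone⟩ := h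
  have stepA : ∀ i, ∃ (m : ℕ) (wi : Γ), 0 < m ∧ 𝒜 wi ≠ ⊥ ∧ (m : ℚ) • x i = (1:ℚ) ⊗ₜ[ℤ] wi := by
    intro i
    obtain ⟨M, c, v, hc, hv, hxi⟩ := hx i
    obtain ⟨m, hm, hn⟩ := aux_denom c hc
    choose n hnc using hn
    refine ⟨m, ∑ j, n j • v j, hm, ?_, ?_⟩
    · have : (∑ j, n j • v j) ∈ effMonoid 𝒜 :=
        AddSubmonoid.sum_mem _ (fun j _ => AddSubmonoid.nsmul_mem _ (hv j) (n j))
      exact this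
    · rw [hxi, Finset.smul_sum, TensorProduct.tmul_sum]
      refine Finset.sum_congr rfl fun j _ => ?_
      rw [aux_tmul_nsmul, hnc j, smul_smul]
  choose m w hm hwEff hwx using stepA
  have stepC : ∀ (δ : Γ) (t : Fin N → ℚ), (∀ i, 0 ≤ t i) →
      ((1:ℚ) ⊗ₜ[ℤ] δ = ∑ i, t i • ((1:ℚ) ⊗ₜ[ℤ] w i)) →
      (∃ α β : Γ, 𝒜 α ≠ ⊥ ∧ 𝒜 β ≠ ⊥ ∧ δ + β = α) → 𝒜 δ ≠ ⊥ := by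
    intro δ t ht hδ ⟨α, β, hα, hβ, hδβ⟩
    obtain ⟨n, hn, hq⟩ := aux_denom t ht
    choose q hqc using hq
    have key : (1:ℚ) ⊗ₜ[ℤ] (n • δ) = (1:ℚ) ⊗ₜ[ℤ] (∑ i, q i • w i) := by
      rw [aux_tmul_nsmul, hδ, Finset.smul_sum, TensorProduct.tmul_sum]
      refine Finset.sum_congr rfl fun i _ => ?_
      rw [aux_tmul_nsmul, hqc i, smul_smul]
    have keyΓ : n • δ = ∑ i, q i • w i := aux_tmul_inj key
    have hnδ : 𝒜 (n • δ) ≠ ⊥ := by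
      rw [keyΓ]
      exact AddSubmonoid.sum_mem (effMonoid 𝒜)
        (fun i _ => AddSubmonoid.nsmul_mem _ (hwEff i) (q i))
    exact aux_sat 𝒜 hdim hn hα hβ hδβ hnδ
  set T : Set Γ := {δ : Γ | 𝒜 δ ≠ ⊥ ∧ ∃ t : Fin N → ℚ, (∀ i, 0 ≤ t i ∧ t i ≤ 1) ∧
    (1:ℚ) ⊗ₜ[ℤ] δ = ∑ i, t i • ((1:ℚ) ⊗ₜ[ℤ] w i)} with hT
  have Tfin : T.Finite := by
    set b := Module.Free.chooseBasis ℤ Γ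
    set B : Module.Free.ChooseBasisIndex ℤ Γ → ℤ := fun j => ∑ i, |b.repr (w i) j|
    refine Set.Finite.subset (aux_finite_bounded b B) ?_
    rintro δ ⟨-, t, ht, hδ⟩ j
    have hco := aux_coords b t w δ hδ j
    have habs : |((b.repr δ j : ℤ) : ℚ)| ≤ ∑ i, |((b.repr (w i) j : ℤ) : ℚ)| := by
      rw [hco]
      refine le_trans (Finset.abs_sum_le_sum_abs _ _) ?_
      refine Finset.sum_le_sum fun i _ => ?_
      rw [abs_mul]
      calc |t i| * |((b.repr (w i) j : ℤ) : ℚ)|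
          ≤ 1 * |((b.repr (w i) j : ℤ) : ℚ)| := by
            apply mul_le_mul_of_nonneg_right _ (abs_nonneg _)
            rw [abs_of_nonneg (ht i).1]
            exact (ht i).2
        _ = |((b.repr (w i) j : ℤ) : ℚ)| := one_mul _
    have hBj : ((B j : ℤ) : ℚ) = ∑ i, |((b.repr (w i) j : ℤ) : ℚ)| := by
      simp only [B]
      push_cast
      rfl
    exact_mod_cast le_trans habs (le_of_eq hBj.symm)
  set s : Finset Γ := Tfin.toFinset ∪ Finset.image w Finset.univ with hsdef
  refine ⟨s, ?_⟩
  ext γ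
  simp only [Set.mem_setOf_eq, SetLike.mem_coe]
  constructor
  · intro hγ
    have hγcone : (1:ℚ) ⊗ₜ[ℤ] γ ∈ ratCone {γ : Γ | 𝒜 γ ≠ ⊥} := by
      refine ⟨1, fun _ => 1, fun _ => γ, fun _ => zero_le_one, fun _ => hγ, by simp⟩
    rw [hcone] at hγcone
    obtain ⟨c, hc, hsum⟩ := hγcone
    set d : Fin N → ℚ := fun i => c i / m i with hd
    have hd0 : ∀ i, 0 ≤ d i := fun i => div_nonneg (hc i) (by positivity)
    have hsum' : (1:ℚ) ⊗ₜ[ℤ] γ = ∑ i, d i • ((1:ℚ) ⊗ₜ[ℤ] w i) := by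
      rw [hsum]
      refine Finset.sum_congr rfl fun i _ => ?_
      rw [← hwx i, smul_smul]
      congr 1
      show c i = c i / (m i : ℚ) * (m i : ℚ)
      rw [div_mul_cancel₀]
      exact Nat.cast_ne_zero.mpr (hm i).ne'
    set q : Fin N → ℕ := fun i => ⌊d i⌋.toNat with hqdef
    have hqd : ∀ i, ((q i : ℕ) : ℚ) = (⌊d i⌋ : ℚ) := by
      intro i
      have : (0:ℤ) ≤ ⌊d i⌋ := Int.floor_nonneg.mpr (hd0 i)
      exact_mod_cast Int.toNat_of_nonneg this
    set t : Fin N → ℚ := fun i => d i - q i with htdef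
    have ht01 : ∀ i, 0 ≤ t i ∧ t i ≤ 1 := by
      intro i
      constructor
      · rw [htdef]
        simp only
        rw [hqd i, sub_nonneg]
        exact Int.floor_le _
      · rw [htdef]
        simp only
        rw [hqd i]
        have := Int.lt_floor_add_one (d i)
        linarith
    set β : Γ := ∑ i, q i • w i with hβdef
    have hβEff : 𝒜 β ≠ ⊥ :=
      AddSubmonoid.sum_mem (effMonoid 𝒜) (fun i _ => AddSubmonoid.nsmul_mem _ (hwEff i) (q i))
    set δ : Γ := γ - β with hδdef
    have hδsum : (1:ℚ) ⊗ₜ[ℤ] δ = ∑ i, t i • ((1:ℚ) ⊗ₜ[ℤ] w i) := by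
      have hβsum : (1:ℚ) ⊗ₜ[ℤ] β = ∑ i, ((q i : ℕ) : ℚ) • ((1:ℚ) ⊗ₜ[ℤ] w i) := by
        rw [hβdef, TensorProduct.tmul_sum]
        exact Finset.sum_congr rfl fun i _ => aux_tmul_nsmul _ _
      have hsub' : (1:ℚ) ⊗ₜ[ℤ] δ = (1:ℚ) ⊗ₜ[ℤ] γ - (1:ℚ) ⊗ₜ[ℤ] β := by
        rw [hδdef, TensorProduct.tmul_sub]
      rw [hsub', hsum', hβsum, ← Finset.sum_sub_distrib]
      refine Finset.sum_congr rfl fun i _ => ?_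
      rw [← sub_smul]
    have hδEff : 𝒜 δ ≠ ⊥ :=
      stepC δ t (fun i => (ht01 i).1) hδsum ⟨γ, β, hγ, hβEff, by rw [hδdef, sub_add_cancel]⟩
    have hδT : δ ∈ T := ⟨hδEff, t, ht01, hδsum⟩
    have hγeq : γ = δ + β := by rw [hδdef, sub_add_cancel]
    rw [hγeq]
    refine AddSubmonoid.add_mem _ (AddSubmonoid.subset_closure ?_) ?_
    · rw [hsdef]
      simp only [Finset.coe_union, Set.mem_union, Set.Finite.coe_toFinset]
      exact Or.inl hδT
    · refine AddSubmonoid.sum_mem _ fun i _ => AddSubmonoid.nsmul_mem _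
        (AddSubmonoid.subset_closure ?_) (q i)
      rw [hsdef]
      simp only [Finset.coe_union, Set.mem_union, Finset.coe_image, Set.mem_image]
      exact Or.inr ⟨i, by simp, rfl⟩
  · intro hγ
    have : γ ∈ effMonoid 𝒜 := by
      refine AddSubmonoid.closure_le.mpr ?_ hγ
      intro σ hσ
      rw [hsdef] at hσ
      simp only [Finset.coe_union, Set.mem_union, Set.Finite.coe_toFinset,
        Finset.coe_image, Set.mem_image] at hσ
      rcases hσ with hσ | ⟨i, -, rfl⟩
      · exact hσ.1
      · exact hwEff i
    exact this

end main

/-- Lemma `lem-equiv-fg`: for a `Γ`-graded `k`-algebra `R` (with `Γ` a finitely generated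
free abelian group) which is an integrally closed integral domain whose fraction field is a
finitely generated field extension of `k`, and with all graded pieces of dimension `≤ 1`,
the following are equivalent: (i) `R` is a finitely generated `k`-algebra;
(ii) the support `Eff(R)` is a finitely generated monoid;
(iii) the cone `Eff(R)_{ℚ≥0}` is a finitely generated `ℚ≥0`-monoid. -/
theorem stmt0 {k R Γ : Type*} [Field k] [CommRing R] [Algebra k R]
    [AddCommGroup Γ] [DecidableEq Γ] [Module.Free ℤ Γ] [Module.Finite ℤ Γ]
    (𝒜 : Γ → Submodule k R) [GradedAlgebra 𝒜]
    [IsDomain R] [IsIntegrallyClosed R]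
    [Algebra k (FractionRing R)] [IsScalarTower k R (FractionRing R)]
    (hfrac : ∃ s : Finset (FractionRing R),
      IntermediateField.adjoin k (↑s : Set (FractionRing R)) = ⊤)
    (hdim : ∀ γ : Γ, Module.rank k (𝒜 γ) ≤ 1) :
    List.TFAE
      [ Algebra.FiniteType k R,
        ∃ s : Finset Γ,
          {γ : Γ | 𝒜 γ ≠ ⊥} = ↑(AddSubmonoid.closure (↑s : Set Γ)),
        ∃ (N : ℕ) (x : Fin N → ℚ ⊗[ℤ] Γ),
          (∀ i, x i ∈ ratCone {γ : Γ | 𝒜 γ ≠ ⊥}) ∧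
          ratCone {γ : Γ | 𝒜 γ ≠ ⊥} =
            {y | ∃ c : Fin N → ℚ, (∀ i, 0 ≤ c i) ∧ y = ∑ i, c i • x i} ] := by
  tfae_have 1 → 2 := aux_one_to_two 𝒜
  tfae_have 2 → 1 := aux_two_to_one 𝒜 hdim
  tfae_have 2 → 3 := aux_two_to_three 𝒜
  tfae_have 3 → 2 := aux_three_to_two 𝒜 hdim
  tfae_finish
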